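/- Let K be a compact metric space with a probability measure μ₀. For h ∈ C⁰(K;ℝ) define the probability measure μ_h by dμ_h = e^h dμ₀ / ∫_K e^h dμ₀. Then for all h, g ∈ C⁰(K;ℝ), the total variation distance satisfies ‖μ_h − μ_g‖ ≤ ‖h − g‖_{∞}. -/

import Mathlib

open MeasureTheory Real Set

section Aux

variable {K : Type*} [MetricSpace K] [CompactSpace K] [MeasurableSpace K] [BorelSpace K]

private lemma cont_integrable (μ : Measure K) [IsFiniteMeasure μ] {f : K → ℝ}
    (hf : Continuous f) : Integrable f μ :=
  integrableOn_univ.mp (hf.continuousOn.integrableOn_compact isCompact_univ)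

/-- Weighted mean absolute deviation bound: if `ρ ≥ 0` integrates to `1` and `|φ| ≤ c`,
then for any measurable `A`, `|∫_A (φ - m) ρ| ≤ c/2` where `m = ∫ φ ρ`. -/
private lemma weighted_dev_bound (μ : Measure K) [IsProbabilityMeasure μ]
    {φ ρ : K → ℝ} (hφ : Continuous φ) (hρ : Continuous ρ)
    (hρ0 : ∀ x, 0 ≤ ρ x) (hρ1 : ∫ x, ρ x ∂μ = 1)
    {c : ℝ} (hc : ∀ x, |φ x| ≤ c) {A : Set K} (hA : MeasurableSet A) :
    |∫ x in A, (φ x - ∫ y, φ y * ρ y ∂μ) * ρ x ∂μ| ≤ c / 2 := by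
  have hKne : Nonempty K := by
    by_contra hne
    rw [not_nonempty_iff] at hne
    have h1 := measure_univ (μ := μ)
    rw [Set.univ_eq_empty_iff.mpr hne, measure_empty] at h1
    exact zero_ne_one h1
  have hc0 : 0 ≤ c := le_trans (abs_nonneg _) (hc (Classical.arbitrary K))
  set m : ℝ := ∫ y, φ y * ρ y ∂μ with hmdef
  have hρint : Integrable ρ μ := cont_integrable μ hρ
  have hφρint : Integrable (fun x => φ x * ρ x) μ :=
    cont_integrable μ (hφ.mul hρ)
  have hdevint : Integrable (fun x => (φ x - m) * ρ x) μ :=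
    cont_integrable μ (((hφ.sub continuous_const)).mul hρ)
  have hmaxp : Integrable (fun x => max (φ x - m) 0 * ρ x) μ :=
    cont_integrable μ (((hφ.sub continuous_const).max continuous_const).mul hρ)
  have hmaxm : Integrable (fun x => max (m - φ x) 0 * ρ x) μ :=
    cont_integrable μ (((continuous_const.sub hφ).max continuous_const).mul hρ)
  have hmabs : |m| ≤ c := by
    calc |m| ≤ ∫ y, |φ y * ρ y| ∂μ := by
          simpa only [Real.norm_eq_abs] using
            norm_integral_le_integral_norm (μ := μ) (fun y => φ y * ρ y)
      _ ≤ ∫ y, c * ρ y ∂μ := by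
          refine integral_mono hφρint.abs (hρint.const_mul c) fun x => ?_
          rw [abs_mul, abs_of_nonneg (hρ0 x)]
          exact mul_le_mul_of_nonneg_right (hc x) (hρ0 x)
      _ = c := by rw [integral_const_mul, hρ1, mul_one]
  obtain ⟨hm1, hm2⟩ := abs_le.mp hmabs
  set U : Set K := {x | m < φ x} with hUdef
  have hU : MeasurableSet U := measurableSet_lt measurable_const hφ.measurable
  set p : ℝ := ∫ x in U, ρ x ∂μ with hpdef
  set q : ℝ := ∫ x in Uᶜ, ρ x ∂μ with hqdef
  have hpq : p + q = 1 := by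
    rw [hpdef, hqdef, integral_add_compl hU hρint, hρ1]
  have hp0 : 0 ≤ p := setIntegral_nonneg hU fun x _ => hρ0 x
  have hq0 : 0 ≤ q := setIntegral_nonneg hU.compl fun x _ => hρ0 x
  set Sp : ℝ := ∫ x, max (φ x - m) 0 * ρ x ∂μ with hSpdef
  set Sm : ℝ := ∫ x, max (m - φ x) 0 * ρ x ∂μ with hSmdef
  have hSp0 : 0 ≤ Sp := integral_nonneg fun x => mul_nonneg (le_max_right _ _) (hρ0 x)
  have hSm0 : 0 ≤ Sm := integral_nonneg fun x => mul_nonneg (le_max_right _ _) (hρ0 x)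
  have hSpSm : Sp = Sm := by
    have h1 : Sp - Sm = ∫ x, (φ x - m) * ρ x ∂μ := by
      rw [hSpdef, hSmdef, ← integral_sub hmaxp hmaxm]
      refine integral_congr_ae (Filter.Eventually.of_forall fun x => ?_)
      dsimp only
      rcases le_total (φ x) m with hle | hle
      · rw [max_eq_right (by linarith : φ x - m ≤ 0), max_eq_left (by linarith : (0:ℝ) ≤ m - φ x)]
        ring
      · rw [max_eq_left (by linarith : (0:ℝ) ≤ φ x - m),
          max_eq_right (by linarith : m - φ x ≤ 0)]
        ring
    have h2 : ∫ x, (φ x - m) * ρ x ∂μ = 0 := by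
      have : (fun x => (φ x - m) * ρ x) = fun x => φ x * ρ x - m * ρ x := by
        funext x; ring
      rw [this, integral_sub hφρint (hρint.const_mul m), integral_const_mul, hρ1, ← hmdef]
      ring
    have := h1.trans h2
    linarith
  have hSple : Sp ≤ (c - m) * p := by
    have hmono : ∀ x, max (φ x - m) 0 * ρ x ≤ U.indicator (fun x => (c - m) * ρ x) x := by
      intro x
      by_cases hx : x ∈ U
      · rw [indicator_of_mem hx]
        have h1 : φ x - m ≤ c - m := by have := (abs_le.mp (hc x)).2; linarith
        have hxm : m < φ x := hx
        rw [max_eq_left (by linarith : (0:ℝ) ≤ φ x - m)]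
        exact mul_le_mul_of_nonneg_right h1 (hρ0 x)
      · rw [indicator_of_notMem hx]
        have : φ x ≤ m := not_lt.mp hx
        rw [max_eq_right (by linarith : φ x - m ≤ 0), zero_mul]
    calc Sp ≤ ∫ x, U.indicator (fun x => (c - m) * ρ x) x ∂μ :=
          integral_mono hmaxp ((hρint.const_mul _).indicator hU) hmono
      _ = ∫ x in U, (c - m) * ρ x ∂μ := integral_indicator hU
      _ = (c - m) * p := by rw [integral_const_mul, hpdef]
  have hSmle : Sm ≤ (c + m) * q := by
    have hmono : ∀ x, max (m - φ x) 0 * ρ x ≤ Uᶜ.indicator (fun x => (c + m) * ρ x) x := by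
      intro x
      by_cases hx : x ∈ U
      · rw [indicator_of_notMem (by simpa using hx)]
        have hxm : m < φ x := hx
        rw [max_eq_right (by linarith : m - φ x ≤ 0), zero_mul]
      · rw [indicator_of_mem (by simpa using hx)]
        have h1 : m - φ x ≤ c + m := by have := (abs_le.mp (hc x)).1; linarith
        rcases le_total (m - φ x) 0 with hle | hle
        · rw [max_eq_right hle, zero_mul]
          exact mul_nonneg (by linarith) (hρ0 x)
        · rw [max_eq_left hle]
          exact mul_le_mul_of_nonneg_right h1 (hρ0 x)
    calc Sm ≤ ∫ x, Uᶜ.indicator (fun x => (c + m) * ρ x) x ∂μ :=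
          integral_mono hmaxm ((hρint.const_mul _).indicator hU.compl) hmono
      _ = ∫ x in Uᶜ, (c + m) * ρ x ∂μ := integral_indicator hU.compl
      _ = (c + m) * q := by rw [integral_const_mul, hqdef]
  have hSphalf : Sp ≤ c / 2 := by
    have h1 : Sp * Sp ≤ ((c - m) * p) * ((c + m) * q) := by
      calc Sp * Sp = Sp * Sm := by rw [hSpSm]
        _ ≤ ((c - m) * p) * ((c + m) * q) :=
          mul_le_mul hSple hSmle hSm0 (mul_nonneg (by linarith) hp0)
    have hpqle : p * q ≤ 1 / 4 := by nlinarith [sq_nonneg (p - q)]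
    have h3 : ((c - m) * p) * ((c + m) * q) ≤ c ^ 2 / 4 := by
      have e1 : ((c - m) * p) * ((c + m) * q) = (c ^ 2 - m ^ 2) * (p * q) := by ring
      have e2 : (c ^ 2 - m ^ 2) * (p * q) ≤ c ^ 2 * (p * q) := by
        have : 0 ≤ p * q := mul_nonneg hp0 hq0
        nlinarith [sq_nonneg m]
      have e3 : c ^ 2 * (p * q) ≤ c ^ 2 / 4 := by nlinarith [sq_nonneg c]
      linarith
    nlinarith [h1, h3, hSp0, hc0]
  rw [abs_le]
  constructor
  · have hpt : ∀ x, -(max (m - φ x) 0 * ρ x) ≤ (φ x - m) * ρ x := by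
      intro x
      rcases le_total (φ x) m with hle | hle
      · rw [max_eq_left (by linarith : (0:ℝ) ≤ m - φ x)]
        exact le_of_eq (by ring)
      · rw [max_eq_right (by linarith : m - φ x ≤ 0)]
        rw [zero_mul, neg_zero]
        exact mul_nonneg (by linarith) (hρ0 x)
    have h1 : ∫ x in A, -(max (m - φ x) 0 * ρ x) ∂μ ≤ ∫ x in A, (φ x - m) * ρ x ∂μ :=
      setIntegral_mono_on hmaxm.neg.integrableOn hdevint.integrableOn hA fun x _ => hpt x
    have h2 : ∫ x in A, max (m - φ x) 0 * ρ x ∂μ ≤ Sm :=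
      setIntegral_le_integral hmaxm
        (Filter.Eventually.of_forall fun x => mul_nonneg (le_max_right _ _) (hρ0 x))
    rw [integral_neg] at h1
    have : -(c / 2) ≤ -Sm := by rw [← hSpSm] at *; linarith
    linarith
  · have hpt : ∀ x, (φ x - m) * ρ x ≤ max (φ x - m) 0 * ρ x := fun x =>
      mul_le_mul_of_nonneg_right (le_max_left _ _) (hρ0 x)
    have h1 : ∫ x in A, (φ x - m) * ρ x ∂μ ≤ ∫ x in A, max (φ x - m) 0 * ρ x ∂μ :=
      setIntegral_mono_on hdevint.integrableOn hmaxp.integrableOn hA fun x _ => hpt x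
    have h2 : ∫ x in A, max (φ x - m) 0 * ρ x ∂μ ≤ Sp :=
      setIntegral_le_integral hmaxp
        (Filter.Eventually.of_forall fun x => mul_nonneg (le_max_right _ _) (hρ0 x))
    linarith

private lemma exp_integral_pos (μ : Measure K) [IsProbabilityMeasure μ] {f : K → ℝ}
    (hf : Continuous f) : 0 < ∫ x, Real.exp (f x) ∂μ := by
  have hKne : Nonempty K := by
    by_contra hne
    rw [not_nonempty_iff] at hne
    have h1 := measure_univ (μ := μ)
    rw [Set.univ_eq_empty_iff.mpr hne, measure_empty] at h1
    exact zero_ne_one h1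
  have hint : Integrable (fun x => Real.exp (f x)) μ := cont_integrable μ (Real.continuous_exp.comp hf)
  rw [integral_pos_iff_support_of_nonneg (fun x => (Real.exp_pos _).le) hint]
  have : Function.support (fun x => Real.exp (f x)) = univ := by
    ext x; simp [Function.mem_support, (Real.exp_pos (f x)).ne']
  rw [this]
  simp

/-- Key per-set bound: the Gibbs densities for `h` and `g` give set masses that differ
by at most `‖h - g‖ / 2`. -/
private lemma gibbs_set_bound (μ : Measure K) [IsProbabilityMeasure μ] (h g : C(K, ℝ))
    {A : Set K} (hA : MeasurableSet A) :
    |(∫ x in A, Real.exp (h x) / ∫ y, Real.exp (h y) ∂μ ∂μ)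
      - ∫ x in A, Real.exp (g x) / ∫ y, Real.exp (g y) ∂μ ∂μ| ≤ ‖h - g‖ / 2 := by
  set c : ℝ := ‖h - g‖ with hcdef
  have hc0 : 0 ≤ c := norm_nonneg _
  have hφc : ∀ x, |h x - g x| ≤ c := by
    intro x
    have := (h - g).norm_coe_le_norm x
    simpa [Real.norm_eq_abs] using this
  set e : ℝ → K → ℝ := fun t x => Real.exp (g x + t * (h x - g x)) with hedef
  have hecont : ∀ t, Continuous (e t) :=
    fun t => Real.continuous_exp.comp
      (g.continuous.add (continuous_const.mul (h.continuous.sub g.continuous)))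
  have heint : ∀ t, Integrable (e t) μ := fun t => cont_integrable μ (hecont t)
  have hDcont : ∀ t, Continuous (fun x => (h x - g x) * e t x) :=
    fun t => (h.continuous.sub g.continuous).mul (hecont t)
  have hDint : ∀ t, Integrable (fun x => (h x - g x) * e t x) μ :=
    fun t => cont_integrable μ (hDcont t)
  set Z : ℝ → ℝ := fun t => ∫ x, e t x ∂μ with hZdef
  set N : ℝ → ℝ := fun t => ∫ x in A, e t x ∂μ with hNdef
  have hZpos : ∀ t, 0 < Z t := fun t =>
    exp_integral_pos μ (g.continuous.add (continuous_const.mul (h.continuous.sub g.continuous)))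
  -- derivative of parametric set integrals
  have hderiv : ∀ (B : Set K), MeasurableSet B → ∀ t₀ : ℝ,
      HasDerivAt (fun t => ∫ x in B, e t x ∂μ) (∫ x in B, (h x - g x) * e t₀ x ∂μ) t₀ := by
    intro B hB t₀
    have key := hasDerivAt_integral_of_dominated_loc_of_deriv_le (μ := μ.restrict B)
      (F := fun t x => e t x) (F' := fun t x => (h x - g x) * e t x) (x₀ := t₀)
      (bound := fun _ => c * Real.exp (‖g‖ + (|t₀| + 1) * c)) (s := Metric.ball t₀ 1) (Metric.ball_mem_nhds t₀ one_pos)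
      (Filter.Eventually.of_forall fun t => ((hecont t).aestronglyMeasurable).restrict)
      ((heint t₀).restrict)
      ((hDcont t₀).aestronglyMeasurable.restrict)
      ?_ (integrable_const _) ?_
    · exact key.2
    · refine Filter.Eventually.of_forall fun x => fun t ht => ?_
      have ht1 : |t| ≤ |t₀| + 1 := by
        have := mem_ball_iff_norm.mp ht
        rw [Real.norm_eq_abs] at this
        calc |t| = |t₀ + (t - t₀)| := by ring_nf
          _ ≤ |t₀| + |t - t₀| := abs_add_le _ _
          _ ≤ |t₀| + 1 := by linarith [this.le]
      have harg : g x + t * (h x - g x) ≤ ‖g‖ + (|t₀| + 1) * c := by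
        have h1 : g x ≤ ‖g‖ := by
          have := g.norm_coe_le_norm x
          rw [Real.norm_eq_abs] at this
          linarith [abs_le.mp this]
        have h2 : t * (h x - g x) ≤ (|t₀| + 1) * c := by
          calc t * (h x - g x) ≤ |t * (h x - g x)| := le_abs_self _
            _ = |t| * |h x - g x| := abs_mul _ _
            _ ≤ (|t₀| + 1) * c :=
              mul_le_mul ht1 (hφc x) (abs_nonneg _) (by positivity)
        linarith
      calc ‖(h x - g x) * e t x‖ = |h x - g x| * e t x := by
            rw [norm_mul, Real.norm_eq_abs, Real.norm_eq_abs, abs_of_pos (Real.exp_pos _)]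
        _ ≤ c * Real.exp (‖g‖ + (|t₀| + 1) * c) :=
            mul_le_mul (hφc x) (Real.exp_le_exp.mpr harg) (Real.exp_pos _).le hc0
    · refine Filter.Eventually.of_forall fun x => fun t _ => ?_
      have h1 : HasDerivAt (fun t : ℝ => g x + t * (h x - g x)) (h x - g x) t :=
        (hasDerivAt_mul_const (h x - g x)).const_add (g x)
      have := h1.exp
      simpa [hedef, mul_comm] using this
  have hZderiv : ∀ t₀ : ℝ, HasDerivAt Z (∫ x, (h x - g x) * e t₀ x ∂μ) t₀ := by
    intro t₀
    have := hderiv univ MeasurableSet.univ t₀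
    simpa [hZdef, setIntegral_univ] using this
  have hNderiv : ∀ t₀ : ℝ, HasDerivAt N (∫ x in A, (h x - g x) * e t₀ x ∂μ) t₀ :=
    fun t₀ => hderiv A hA t₀
  set F : ℝ → ℝ := fun t => N t / Z t with hFdef
  have hFderiv : ∀ t : ℝ, HasDerivAt F
      (((∫ x in A, (h x - g x) * e t x ∂μ) * Z t - N t * ∫ x, (h x - g x) * e t x ∂μ) / Z t ^ 2)
      t := fun t => (hNderiv t).div (hZderiv t) (hZpos t).ne'
  -- bound on the derivative
  have hFbound : ∀ t : ℝ,
      |((∫ x in A, (h x - g x) * e t x ∂μ) * Z t - N t * ∫ x, (h x - g x) * e t x ∂μ) / Z t ^ 2|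
        ≤ c / 2 := by
    intro t
    have hZt := hZpos t
    have hρ0 : ∀ x, 0 ≤ e t x / Z t := fun x => div_nonneg (Real.exp_pos _).le hZt.le
    have hρ1 : ∫ x, e t x / Z t ∂μ = 1 := by
      rw [integral_div, div_self hZt.ne']
    have hm : ∫ y, (h y - g y) * (e t y / Z t) ∂μ = (∫ y, (h y - g y) * e t y ∂μ) / Z t := by
      rw [← integral_div]
      congr 1
      funext y
      ring
    have key := weighted_dev_bound μ (φ := fun x => h x - g x) (ρ := fun x => e t x / Z t)
      (h.continuous.sub g.continuous) ((hecont t).div_const _) hρ0 hρ1 hφc hA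
    rw [hm] at key
    have hrw : ∫ x in A, ((h x - g x) - (∫ y, (h y - g y) * e t y ∂μ) / Z t) * (e t x / Z t) ∂μ
        = ((∫ x in A, (h x - g x) * e t x ∂μ) * Z t - N t * ∫ x, (h x - g x) * e t x ∂μ)
            / Z t ^ 2 := by
      have hptw : (fun x => ((h x - g x) - (∫ y, (h y - g y) * e t y ∂μ) / Z t) * (e t x / Z t))
          = fun x => (1 / Z t) * ((h x - g x) * e t x)
              - ((∫ y, (h y - g y) * e t y ∂μ) / Z t ^ 2) * e t x := by
        funext x
        field_simp
      rw [hptw, integral_sub (((hDint t).const_mul _).integrableOn)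
        (((heint t).const_mul _).integrableOn), integral_const_mul, integral_const_mul, hNdef]
      field_simp
    rw [← hrw]
    exact key
  -- mean value inequality on [0,1]
  have hmvt : ‖F 1 - F 0‖ ≤ c / 2 * ‖(1 : ℝ) - 0‖ := by
    refine Convex.norm_image_sub_le_of_norm_hasDerivWithin_le
      (f := F)
      (f' := fun t => ((∫ x in A, (h x - g x) * e t x ∂μ) * Z t
          - N t * ∫ x, (h x - g x) * e t x ∂μ) / Z t ^ 2)
      (fun t _ => (hFderiv t).hasDerivWithinAt)
      (fun t _ => by rw [Real.norm_eq_abs]; exact hFbound t)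
      convex_univ (mem_univ 0) (mem_univ 1)
  have he1 : (fun x => e 1 x) = fun x => Real.exp (h x) := by
    funext x
    simp only [hedef]
    congr 1
    ring
  have he0 : (fun x => e 0 x) = fun x => Real.exp (g x) := by
    funext x
    simp only [hedef]
    congr 1
    ring
  have hF1 : F 1 = ∫ x in A, Real.exp (h x) / ∫ y, Real.exp (h y) ∂μ ∂μ := by
    simp only [hFdef, hNdef, hZdef, he1]
    rw [integral_div]
  have hF0 : F 0 = ∫ x in A, Real.exp (g x) / ∫ y, Real.exp (g y) ∂μ ∂μ := by
    simp only [hFdef, hNdef, hZdef, he0]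
    rw [integral_div]
  rw [← hF1, ← hF0]
  have : ‖(1 : ℝ) - 0‖ = 1 := by norm_num
  rw [this, mul_one] at hmvt
  simpa [Real.norm_eq_abs] using hmvt

end Aux

/-- Simon's lemma: on a compact metric space `K` with a probability measure `μ₀`, the
Gibbs measures `dμ_h = e^h dμ₀ / ∫ e^h dμ₀` satisfy
`‖μ_h − μ_g‖ ≤ ‖h − g‖_∞` in total variation, for continuous `h, g`. -/
theorem gibbs_total_variation_bound {K : Type*} [MetricSpace K] [CompactSpace K]
    [MeasurableSpace K] [BorelSpace K]
    (μ0 : Measure K) [IsProbabilityMeasure μ0] (h g : C(K, ℝ))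
    (μh μg : Measure K) [IsFiniteMeasure μh] [IsFiniteMeasure μg]
    (hμh : μh = μ0.withDensity
      (fun x => ENNReal.ofReal (Real.exp (h x) / ∫ y, Real.exp (h y) ∂μ0)))
    (hμg : μg = μ0.withDensity
      (fun x => ENNReal.ofReal (Real.exp (g x) / ∫ y, Real.exp (g y) ∂μ0))) :
    (μh.toSignedMeasure - μg.toSignedMeasure).totalVariation Set.univ
      ≤ ENNReal.ofReal ‖h - g‖ := by
  set c : ℝ := ‖h - g‖ with hcdef
  have hc0 : 0 ≤ c := norm_nonneg _
  -- evaluation of the signed measure on measurable sets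
  have happ : ∀ {A : Set K}, MeasurableSet A →
      (μh.toSignedMeasure - μg.toSignedMeasure) A
        = (∫ x in A, Real.exp (h x) / ∫ y, Real.exp (h y) ∂μ0 ∂μ0)
          - ∫ x in A, Real.exp (g x) / ∫ y, Real.exp (g y) ∂μ0 ∂μ0 := by
    intro A hA
    have hZh : (0:ℝ) ≤ ∫ y, Real.exp (h y) ∂μ0 :=
      integral_nonneg fun y => (Real.exp_pos _).le
    have hZg : (0:ℝ) ≤ ∫ y, Real.exp (g y) ∂μ0 :=
      integral_nonneg fun y => (Real.exp_pos _).le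
    have key : ∀ (f : C(K, ℝ)) (Zf : ℝ), 0 ≤ Zf →
        ((μ0.withDensity (fun x => ENNReal.ofReal (Real.exp (f x) / Zf))) A).toReal
          = ∫ x in A, Real.exp (f x) / Zf ∂μ0 := by
      intro f Zf hZf
      rw [withDensity_apply _ hA]
      have hint : Integrable (fun x => Real.exp (f x) / Zf) (μ0.restrict A) :=
        (cont_integrable μ0 ((Real.continuous_exp.comp f.continuous).div_const Zf)).restrict
      rw [← ofReal_integral_eq_lintegral_ofReal hint
        (Filter.Eventually.of_forall fun x => div_nonneg (Real.exp_pos _).le hZf)]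
      rw [ENNReal.toReal_ofReal (setIntegral_nonneg hA fun x _ => div_nonneg (Real.exp_pos _).le hZf)]
    rw [Measure.toSignedMeasure_sub_apply hA, hμh, hμg, measureReal_def, measureReal_def, key h _ hZh, key g _ hZg]
  obtain ⟨i, hi₁, hi₂, hi₃, hpos, hneg⟩ :=
    (μh.toSignedMeasure - μg.toSignedMeasure).toJordanDecomposition_spec
  have hi : |(μh.toSignedMeasure - μg.toSignedMeasure) i| ≤ c / 2 := by
    rw [happ hi₁]; exact gibbs_set_bound μ0 h g hi₁
  have hic : |(μh.toSignedMeasure - μg.toSignedMeasure) iᶜ| ≤ c / 2 := by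
    rw [happ hi₁.compl]; exact gibbs_set_bound μ0 h g hi₁.compl
  unfold SignedMeasure.totalVariation
  rw [Measure.add_apply, hpos, hneg,
    SignedMeasure.toMeasureOfZeroLE_apply _ hi₂ hi₁ MeasurableSet.univ,
    SignedMeasure.toMeasureOfLEZero_apply _ hi₃ hi₁.compl MeasurableSet.univ]
  have hb1 := abs_le.mp hi
  have hb2 := abs_le.mp hic
  have hsum : ENNReal.ofReal (c / 2) + ENNReal.ofReal (c / 2) = ENNReal.ofReal c := by
    rw [← ENNReal.ofReal_add (by linarith) (by linarith)]
    norm_num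
  refine le_trans (add_le_add ?_ ?_) (le_of_eq hsum)
  · rw [ENNReal.ofReal_eq_coe_nnreal (by linarith : (0:ℝ) ≤ c / 2), ENNReal.coe_le_coe,
      ← NNReal.coe_le_coe]
    simp only [NNReal.coe_mk]
    rw [Set.inter_univ]
    linarith
  · rw [ENNReal.ofReal_eq_coe_nnreal (by linarith : (0:ℝ) ≤ c / 2), ENNReal.coe_le_coe,
      ← NNReal.coe_le_coe]
    simp only [NNReal.coe_mk]
    rw [Set.inter_univ]
    linarith
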